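/- Let F : ℝ^{nm × nm} → ℝ be differentiable at X = A ⊗ B (Kronecker product), where A ∈ ℝ^{n×n} and B ∈ ℝ^{m×m} are nonzero matrices. Define G : ℝ^{n×n} → ℝ by G(A₁) = F(A₁ ⊗ B). Then G is differentiable at A and for any factorization B = B_L B_R with B_L, B_R ∈ ℂ^{m×m}, the gradient satisfies ∇G(A) = Σ_{j=1}^m (I_n ⊗ e_jᵀ B_L*) ∇F(X) (I_n ⊗ B_R* e_j), where ∇ denotes the gradient with respect to the Frobenius inner product. -/
import Mathlib


open Matrix Kronecker

attribute [local instance] Matrix.frobeniusNormedAddCommGroup Matrix.frobeniusNormedSpace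

theorem stmt_6 (n m : ℕ)
    (A : Matrix (Fin n) (Fin n) ℝ) (B : Matrix (Fin m) (Fin m) ℝ)
    (hA : A ≠ 0) (hB : B ≠ 0)
    (F : Matrix (Fin n × Fin m) (Fin n × Fin m) ℝ → ℝ)
    (G : Matrix (Fin n) (Fin n) ℝ → ℝ) (hG : ∀ A₁, G A₁ = F (A₁ ⊗ₖ B))
    (LF : Matrix (Fin n × Fin m) (Fin n × Fin m) ℝ →L[ℝ] ℝ)
    (gF : Matrix (Fin n × Fin m) (Fin n × Fin m) ℝ)
    (hF : HasFDerivAt F LF (A ⊗ₖ B))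
    (hgF : ∀ Δ, LF Δ = (gFᵀ * Δ).trace) :
    ∃ (LG : Matrix (Fin n) (Fin n) ℝ →L[ℝ] ℝ) (gG : Matrix (Fin n) (Fin n) ℝ),
      HasFDerivAt G LG A ∧
      (∀ Δ, LG Δ = (gGᵀ * Δ).trace) ∧
      ∀ (BL BR : Matrix (Fin m) (Fin m) ℂ), B.map (Complex.ofReal) = BL * BR →
        ∀ k ℓ : Fin n,
          Complex.ofReal (gG k ℓ) =
            (∑ j : Fin m,
              ((1 : Matrix (Fin n) (Fin n) ℂ) ⊗ₖ
                  (Matrix.of fun (_ : Unit) (i : Fin m) => starRingEnd ℂ (BL i j))) *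
                gF.map (Complex.ofReal) *
                ((1 : Matrix (Fin n) (Fin n) ℂ) ⊗ₖ
                  (Matrix.of fun (i : Fin m) (_ : Unit) => starRingEnd ℂ (BR j i))))
              (k, ()) (ℓ, ()) := by
  classical
  let L : Matrix (Fin n) (Fin n) ℝ →ₗ[ℝ] Matrix (Fin n × Fin m) (Fin n × Fin m) ℝ :=
    { toFun := fun Δ => Δ ⊗ₖ B
      map_add' := fun x y => Matrix.add_kronecker x y B
      map_smul' := fun c x => Matrix.smul_kronecker c x B }
  let Lc := LinearMap.toContinuousLinearMap L
  refine ⟨LF.comp Lc, Matrix.of fun k ℓ => ∑ i, ∑ i', gF (k, i) (ℓ, i') * B i i', ?_, ?_, ?_⟩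
  · have hGF : G = F ∘ Lc := funext fun x => hG x
    rw [hGF]
    exact hF.comp A Lc.hasFDerivAt
  · intro Δ
    have : LF (Lc Δ) = LF (Δ ⊗ₖ B) := rfl
    rw [ContinuousLinearMap.comp_apply, this, hgF]
    simp only [Matrix.trace, Matrix.diag, Matrix.mul_apply, Matrix.transpose_apply,
      Matrix.kroneckerMap_apply, Matrix.of_apply, Fintype.sum_prod_type,
      Finset.sum_mul, Finset.mul_sum]
    refine Finset.sum_congr rfl fun x _ => ?_
    rw [Finset.sum_comm]
    refine Finset.sum_congr rfl fun x2 _ => ?_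
    rw [Finset.sum_comm]
    refine Finset.sum_congr rfl fun x3 _ => ?_
    refine Finset.sum_congr rfl fun x1 _ => ?_
    ring
  · intro BL BR hBLR k ℓ
    have hB' : ∀ i i', (BL * BR) i i' = Complex.ofReal (B i i') := by
      intro i i'
      rw [← hBLR]; rfl
    simp only [Matrix.sum_apply, Matrix.mul_apply, Matrix.kroneckerMap_apply,
      Matrix.one_apply, Matrix.of_apply, Matrix.map_apply, Fintype.sum_prod_type,
      Finset.sum_mul, Finset.mul_sum]
    simp only [mul_ite, ite_mul, one_mul, zero_mul, mul_zero, mul_one,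
      Finset.sum_ite_eq, Finset.sum_ite_eq', Finset.mem_univ, if_true]
    push_cast
    simp only [Finset.sum_ite_irrel, Finset.sum_const_zero, Finset.sum_ite_eq,
      Finset.sum_ite_eq', Finset.mem_univ, if_true]
    have key : ∀ (x1 x2 : Fin m),
        ∑ x : Fin m, (starRingEnd ℂ) (BL x2 x) * (↑(gF (k, x2) (ℓ, x1)) : ℂ) *
            (starRingEnd ℂ) (BR x x1)
          = (↑(gF (k, x2) (ℓ, x1)) : ℂ) * ↑(B x2 x1) := by
      intro x1 x2
      have h1 : ∑ x : Fin m, (starRingEnd ℂ) (BL x2 x) * (starRingEnd ℂ) (BR x x1)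
          = (↑(B x2 x1) : ℂ) := by
        have h2 := hB' x2 x1
        rw [Matrix.mul_apply] at h2
        calc ∑ x : Fin m, (starRingEnd ℂ) (BL x2 x) * (starRingEnd ℂ) (BR x x1)
            = (starRingEnd ℂ) (∑ x : Fin m, BL x2 x * BR x x1) := by
              rw [map_sum]
              exact Finset.sum_congr rfl fun x _ => (map_mul _ _ _).symm
          _ = (starRingEnd ℂ) ((↑(B x2 x1) : ℂ)) := by rw [h2]
          _ = ↑(B x2 x1) := Complex.conj_ofReal _
      calc ∑ x : Fin m, (starRingEnd ℂ) (BL x2 x) * (↑(gF (k, x2) (ℓ, x1)) : ℂ) *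
              (starRingEnd ℂ) (BR x x1)
          = (↑(gF (k, x2) (ℓ, x1)) : ℂ) *
              ∑ x : Fin m, (starRingEnd ℂ) (BL x2 x) * (starRingEnd ℂ) (BR x x1) := by
            rw [Finset.mul_sum]
            exact Finset.sum_congr rfl fun x _ => by ring
        _ = _ := by rw [h1]
    conv_rhs => rw [Finset.sum_comm]
    refine Eq.trans Finset.sum_comm ?_
    refine Finset.sum_congr rfl fun x1 _ => ?_
    rw [Finset.sum_comm]
    refine Finset.sum_congr rfl fun x2 _ => ?_
    exact (key x1 x2).symm
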